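/- For the Jensen–Shannon generator f(t) = -(t+1) * log((1+t)/2) + t * log t on (0, ∞), the ratio f'''(t)/f''(t)² equals -(2t + 1) for all t > 0. -/

import Mathlib

theorem stmt_5 (f : ℝ → ℝ)
    (hf : ∀ t > (0:ℝ), f t = -(t + 1) * Real.log ((1 + t) / 2) + t * Real.log t) :
    ∀ t > (0:ℝ), deriv (deriv (deriv f)) t / (deriv (deriv f) t) ^ 2 = -(2 * t + 1) := by
  have h1 : ∀ t > (0:ℝ), deriv f t = Real.log t - Real.log ((1 + t) / 2) := by
    intro t ht
    have hev : f =ᶠ[nhds t] fun s => -(s + 1) * Real.log ((1 + s) / 2) + s * Real.log s := by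
      filter_upwards [isOpen_Ioi.mem_nhds (show t ∈ Set.Ioi (0:ℝ) from ht)] with s hs
      exact hf s hs
    have hne : ((1 + t) / 2 : ℝ) ≠ 0 := by positivity
    have h1t : (1 : ℝ) + t ≠ 0 := by positivity
    have hA : HasDerivAt (fun s : ℝ => (1 + s) / 2) (1 / 2) t := by
      simpa using ((hasDerivAt_id t).const_add 1).div_const 2
    have hB : HasDerivAt (fun s : ℝ => -(s + 1)) (-1) t := by
      exact ((hasDerivAt_id t).add_const 1).neg
    have hd : HasDerivAt (fun s : ℝ => -(s + 1) * Real.log ((1 + s) / 2) + s * Real.log s)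
        ((-1) * Real.log ((1 + t) / 2) + -(t + 1) * (1 / 2 / ((1 + t) / 2))
          + (1 * Real.log t + t * t⁻¹)) t :=
      (hB.mul (hA.log hne)).add ((hasDerivAt_id t).mul (Real.hasDerivAt_log ht.ne'))
    rw [hev.deriv_eq, hd.deriv]
    have ht0 : (t : ℝ) ≠ 0 := ht.ne'
    field_simp
    ring
  have h2 : ∀ t > (0:ℝ), deriv (deriv f) t = t⁻¹ - (1 + t)⁻¹ := by
    intro t ht
    have hev : deriv f =ᶠ[nhds t] fun s => Real.log s - Real.log ((1 + s) / 2) := by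
      filter_upwards [isOpen_Ioi.mem_nhds (show t ∈ Set.Ioi (0:ℝ) from ht)] with s hs
      exact h1 s hs
    have hne : ((1 + t) / 2 : ℝ) ≠ 0 := by positivity
    have h1t : (1 : ℝ) + t ≠ 0 := by positivity
    have hA : HasDerivAt (fun s : ℝ => (1 + s) / 2) (1 / 2) t := by
      simpa using ((hasDerivAt_id t).const_add 1).div_const 2
    have hd : HasDerivAt (fun s : ℝ => Real.log s - Real.log ((1 + s) / 2))
        (t⁻¹ - 1 / 2 / ((1 + t) / 2)) t :=
      (Real.hasDerivAt_log ht.ne').sub (hA.log hne)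
    rw [hev.deriv_eq, hd.deriv]
    have ht0 : (t : ℝ) ≠ 0 := ht.ne'
    field_simp
  have h3 : ∀ t > (0:ℝ), deriv (deriv (deriv f)) t = -(t ^ 2)⁻¹ - (-1 / (1 + t) ^ 2) := by
    intro t ht
    have hev : deriv (deriv f) =ᶠ[nhds t] fun s => s⁻¹ - (1 + s)⁻¹ := by
      filter_upwards [isOpen_Ioi.mem_nhds (show t ∈ Set.Ioi (0:ℝ) from ht)] with s hs
      exact h2 s hs
    have h1t : (1 : ℝ) + t ≠ 0 := by positivity
    have hB : HasDerivAt (fun s : ℝ => (1 + s)⁻¹) (-1 / (1 + t) ^ 2) t := by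
      exact ((hasDerivAt_id t).const_add 1).inv h1t
    have hd : HasDerivAt (fun s : ℝ => s⁻¹ - (1 + s)⁻¹) (-(t ^ 2)⁻¹ - (-1 / (1 + t) ^ 2)) t :=
      (hasDerivAt_inv ht.ne').sub hB
    rw [hev.deriv_eq, hd.deriv]
  intro t ht
  have ht0 : (t : ℝ) ≠ 0 := ht.ne'
  have h1t : (1 : ℝ) + t ≠ 0 := by positivity
  rw [h3 t ht, h2 t ht]
  have hden : (t : ℝ)⁻¹ - (1 + t)⁻¹ = (t * (1 + t))⁻¹ := by field_simp; ring
  rw [hden]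
  field_simp
  ring
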